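/- Let p be a prime with p ≡ 3 (mod 4), let n = (p-1)/2, and let C be the (n+1)×(n+1) matrix with entries C[i][j] = ((j-i)/p) for 0 ≤ i,j ≤ n. Let u be the all-ones column vector of length n+1. Then uᵀ · adj(C) · u = 0, i.e., the sum of all cofactors of C is zero. -/

import Mathlib

open Matrix

theorem cofactor_sum_zero (p : ℕ) [Fact p.Prime] (hp : p % 4 = 3) :
    let n := (p - 1) / 2
    let C : Matrix (Fin (n + 1)) (Fin (n + 1)) ℤ :=
      Matrix.of fun i j => legendreSym p ((j : ℤ) - (i : ℤ))
    ∑ k : Fin (n + 1), ∑ l : Fin (n + 1), adjugate C k l = 0 := by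
  intro n C
  have hp2 : p ≠ 2 := by omega
  have hneg1 : legendreSym p (-1) = -1 := by
    rw [legendreSym.at_neg_one hp2, ZMod.χ₄_nat_three_mod_four hp]
  have hCT : Cᵀ = -C := by
    ext i j
    have : ((j : ℤ) - (i : ℤ)) = (-1) * ((i : ℤ) - (j : ℤ)) := by ring
    simp only [transpose_apply, neg_apply, C, of_apply]
    rw [this, legendreSym.mul, hneg1]
    ring
  have hnodd : Odd n := by
    have : n = 2 * ((p - 3) / 4) + 1 := by simp only [n]; omega
    exact ⟨(p - 3) / 4, by omega⟩
  have hadj : (adjugate C)ᵀ = -adjugate C := by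
    calc (adjugate C)ᵀ = adjugate Cᵀ := adjugate_transpose C
    _ = adjugate ((-1 : ℤ) • C) := by rw [hCT]; simp
    _ = (-1) ^ (Fintype.card (Fin (n + 1)) - 1) • adjugate C := adjugate_smul _ _
    _ = -adjugate C := by
        rw [Fintype.card_fin]
        simp [hnodd.neg_one_pow]
  have hS : ∑ k : Fin (n + 1), ∑ l : Fin (n + 1), adjugate C k l
      = -∑ k : Fin (n + 1), ∑ l : Fin (n + 1), adjugate C k l := by
    conv_lhs => rw [show (∑ k : Fin (n + 1), ∑ l : Fin (n + 1), adjugate C k l) = ∑ l : Fin (n + 1), ∑ k : Fin (n + 1), adjugate C k l from Finset.sum_comm]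
    rw [← Finset.sum_neg_distrib]
    refine Finset.sum_congr rfl fun k _ => ?_
    rw [← Finset.sum_neg_distrib]
    refine Finset.sum_congr rfl fun l _ => ?_
    have := congrFun (congrFun hadj k) l
    simpa [transpose_apply] using this
  linarith
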